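/- arXiv:2405.03102 — 3 statements merged into one kernel-verified Lean document; each statement's English description precedes it below -/
import Mathlib

section
/- (Proposition 3.1.) Let T > 0, let Π : [0,T] → ℝ^{3×3} and Δ : [0,T] → ℝ³ be continuous, and let Θ : [0,T] → ℝ^{3×3} be the fundamental solution matrix, i.e. Θ'(t) = Π(t) Θ(t) for all t ∈ [0,T] and Θ(0) = I. Assume that the (3,3) entry of Θ(T) is nonzero. Then for every pair of initial values ξ, ξ₀ ∈ ℝ there exists one and only one differentiable function v = (v₁, v₂, v₃) : [0,T] → ℝ³ satisfying v'(t) = Π(t) v(t) + Δ(t) for all t ∈ [0,T], together with the mixed boundary conditions v₁(0) = ξ, v₂(0) = ξ₀ and v₃(T) = 0. -/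
open Matrix Set

private lemma aux_norm_mulVec_le (A : Matrix (Fin 3) (Fin 3) ℝ) {C : ℝ}
    (hA : ∀ i j, |A i j| ≤ C) (z : Fin 3 → ℝ) : ‖A *ᵥ z‖ ≤ 3 * C * ‖z‖ := by
  have hC : 0 ≤ C := (abs_nonneg _).trans (hA 0 0)
  rw [pi_norm_le_iff_of_nonneg (by positivity)]
  intro i
  have h1 : (A *ᵥ z) i = ∑ j, A i j * z j := by
    simp [Matrix.mulVec, dotProduct]
  rw [Real.norm_eq_abs, h1]
  calc |∑ j, A i j * z j| ≤ ∑ j, |A i j * z j| := Finset.abs_sum_le_sum_abs _ _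
    _ ≤ ∑ _j : Fin 3, C * ‖z‖ := by
        refine Finset.sum_le_sum fun j _ => ?_
        rw [abs_mul]
        exact mul_le_mul (hA i j) (Real.norm_eq_abs (z j) ▸ norm_le_pi_norm z j)
          (abs_nonneg _) hC
    _ = 3 * C * ‖z‖ := by
        rw [Finset.sum_const, Finset.card_univ, Fintype.card_fin]
        ring

/-- Proposition 3.1: solvability of the mixed (forward–backward) boundary
value problem `v' = M v + Δ`, `v₁(0) = ξ`, `v₂(0) = ξ₀`, `v₃(T) = 0`,
under the nondegeneracy Assumption 3.4 that the `(3,3)` entry of `Θ T`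
is nonzero, where `Θ` is the fundamental solution matrix of `Θ' = M Θ`. -/
theorem mixed_bvp_exists_unique
    (T : ℝ) (hT : 0 < T)
    (M : ℝ → Matrix (Fin 3) (Fin 3) ℝ) (hM : ContinuousOn M (Icc 0 T))
    (Δ : ℝ → Fin 3 → ℝ) (hΔ : ContinuousOn Δ (Icc 0 T))
    (Θ : ℝ → Matrix (Fin 3) (Fin 3) ℝ)
    (hΘ0 : Θ 0 = 1)
    (hΘ : ∀ t ∈ Icc (0 : ℝ) T, ∀ i j,
      HasDerivWithinAt (fun s => Θ s i j) ((M t * Θ t) i j) (Icc 0 T) t)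
    (h33 : Θ T 2 2 ≠ 0)
    (ξ ξ₀ : ℝ) :
    ∃ v : ℝ → Fin 3 → ℝ,
      ((∀ t ∈ Icc (0 : ℝ) T,
          HasDerivWithinAt v (M t *ᵥ v t + Δ t) (Icc 0 T) t) ∧
        v 0 0 = ξ ∧ v 0 1 = ξ₀ ∧ v T 2 = 0) ∧
      ∀ w : ℝ → Fin 3 → ℝ,
        ((∀ t ∈ Icc (0 : ℝ) T,
            HasDerivWithinAt w (M t *ᵥ w t + Δ t) (Icc 0 T) t) ∧
          w 0 0 = ξ ∧ w 0 1 = ξ₀ ∧ w T 2 = 0) →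
        EqOn w v (Icc 0 T) := by
  have hTmem : T ∈ Icc (0 : ℝ) T := ⟨hT.le, le_rfl⟩
  have h0mem : (0 : ℝ) ∈ Icc (0 : ℝ) T := ⟨le_rfl, hT.le⟩
  -- the clamping projection onto `[0, T]`
  set π : ℝ → ℝ := fun t => max 0 (min T t) with hπdef
  have hπmem : ∀ t, π t ∈ Icc (0 : ℝ) T := fun t =>
    ⟨le_max_left _ _, max_le hT.le (min_le_left _ _)⟩
  have hπeq : ∀ t ∈ Icc (0 : ℝ) T, π t = t := by
    intro t ht
    simp only [hπdef]
    rw [min_eq_right ht.2, max_eq_right ht.1]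
  have hπc : Continuous π := continuous_const.max (continuous_const.min continuous_id)
  -- continuity of Θ on `[0, T]`
  have hΘcont : ContinuousOn Θ (Icc 0 T) := by
    apply continuousOn_pi.2; intro i; apply continuousOn_pi.2; intro j
    exact fun t ht => (hΘ t ht i j).continuousWithinAt
  -- clamped versions, continuous on all of ℝ
  set Θc : ℝ → Matrix (Fin 3) (Fin 3) ℝ := fun s => Θ (π s) with hΘcdef
  have hΘcc : Continuous Θc := hΘcont.comp_continuous hπc hπmem
  set Δc : ℝ → Fin 3 → ℝ := fun s => Δ (π s) with hΔcdef
  have hΔcc : Continuous Δc := hΔ.comp_continuous hπc hπmem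
  set Mc : ℝ → Matrix (Fin 3) (Fin 3) ℝ := fun s => M (π s) with hMcdef
  have hMcc : Continuous Mc := hM.comp_continuous hπc hπmem
  -- a uniform bound on the entries of M on [0, T]
  obtain ⟨C, hC⟩ : ∃ C : ℝ, ∀ t ∈ Icc (0 : ℝ) T, ∀ i j, |M t i j| ≤ C := by
    obtain ⟨C, hC⟩ := isCompact_Icc.exists_bound_of_continuousOn
      (f := fun t => ∑ i : Fin 3, ∑ j : Fin 3, |M t i j|) (by
        apply continuousOn_finset_sum; intro i _
        apply continuousOn_finset_sum; intro j _
        exact ((continuousOn_pi.1 ((continuousOn_pi.1 hM) i)) j).abs)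
    refine ⟨C, fun t ht i j => ?_⟩
    have h1 : |M t i j| ≤ ∑ k : Fin 3, |M t i k| :=
      Finset.single_le_sum (f := fun k : Fin 3 => |M t i k|) (fun k _ => abs_nonneg _)
        (Finset.mem_univ j)
    have h2 : (∑ k : Fin 3, |M t i k|) ≤ ∑ l : Fin 3, ∑ k : Fin 3, |M t l k| :=
      Finset.single_le_sum (f := fun l : Fin 3 => ∑ k : Fin 3, |M t l k|)
        (fun l _ => Finset.sum_nonneg fun _ _ => abs_nonneg _) (Finset.mem_univ i)
    have h3 := hC t ht
    rw [Real.norm_eq_abs] at h3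
    exact h1.trans (h2.trans ((le_abs_self _).trans h3))
  have hCpos : 0 ≤ C := (abs_nonneg _).trans (hC 0 h0mem 0 0)
  set K : NNReal := ⟨3 * C, by positivity⟩ with hKdef
  have hMcb : ∀ t, ∀ i j, |Mc t i j| ≤ C := fun t i j => hC _ (hπmem t) i j
  -- the homogeneous vector field is uniformly Lipschitz
  have hlip : ∀ t : ℝ,
      LipschitzOnWith K (fun y : Fin 3 → ℝ => Mc t *ᵥ y) univ := by
    intro t
    apply LipschitzWith.lipschitzOnWith
    apply LipschitzWith.of_dist_le_mul
    intro x y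
    rw [dist_eq_norm, dist_eq_norm, ← Matrix.mulVec_sub]
    exact aux_norm_mulVec_le _ (hMcb t) _
  -- neighborhood facts
  have hIci : ∀ t ∈ Ico (0 : ℝ) T, Icc (0 : ℝ) T ∈ nhdsWithin t (Ici t) := by
    intro t ht
    exact mem_nhdsWithin.2 ⟨Iio T, isOpen_Iio, ht.2,
      fun x hx => ⟨ht.1.trans hx.2, hx.1.le⟩⟩
  have hIic : ∀ t ∈ Ioc (0 : ℝ) T, Icc (0 : ℝ) T ∈ nhdsWithin t (Iic t) := by
    intro t ht
    exact mem_nhdsWithin.2 ⟨Ioi 0, isOpen_Ioi, ht.1,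
      fun x hx => ⟨hx.1.le, hx.2.trans ht.2⟩⟩
  -- derivative of the homogeneous flow
  have hΘd : ∀ z : Fin 3 → ℝ, ∀ t ∈ Icc (0 : ℝ) T,
      HasDerivWithinAt (fun s => Θ s *ᵥ z) (Mc t *ᵥ (Θ t *ᵥ z)) (Icc 0 T) t := by
    intro z t ht
    have h1 : Mc t *ᵥ (Θ t *ᵥ z) = (M t * Θ t) *ᵥ z := by
      rw [Matrix.mulVec_mulVec, hMcdef]
      simp only [hπeq t ht]
    rw [h1, hasDerivWithinAt_pi]
    intro i
    simp only [Matrix.mulVec, dotProduct]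
    exact HasDerivWithinAt.fun_sum fun j _ => (hΘ t ht i j).mul_const (z j)
  -- continuity of the homogeneous flow
  have hflowcont : ∀ z : Fin 3 → ℝ, ContinuousOn (fun s => Θ s *ᵥ z) (Icc 0 T) := by
    intro z
    refine ((hΘcc.matrix_mulVec (B := fun _ => z) continuous_const).continuousOn).congr ?_
    intro s hs
    simp only [hΘcdef, hπeq s hs]
  -- the determinant of Θ never vanishes on [0, T]
  have hdet : ∀ t ∈ Icc (0 : ℝ) T, (Θ t).det ≠ 0 := by
    intro t₀ ht₀
    have hker : ∀ z : Fin 3 → ℝ, Θ t₀ *ᵥ z = 0 → z = 0 := by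
      intro z hz
      rcases eq_or_lt_of_le ht₀.1 with h0 | h0
      · rw [← h0, hΘ0, Matrix.one_mulVec] at hz
        exact hz
      · have ht₀mem : Icc (0 : ℝ) t₀ ⊆ Icc (0 : ℝ) T := Icc_subset_Icc le_rfl ht₀.2
        have key : EqOn (fun s => Θ s *ᵥ z) (fun _ => (0 : Fin 3 → ℝ)) (Icc 0 t₀) := by
          apply ODE_solution_unique_of_mem_Icc_left
            (v := fun t (y : Fin 3 → ℝ) => Mc t *ᵥ y) (s := fun _ => univ) (K := K)
            (fun t _ => hlip t)
          · exact (hflowcont z).mono ht₀mem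
          · intro t ht
            have htI : t ∈ Icc (0 : ℝ) T := ht₀mem (Ioc_subset_Icc_self ht)
            exact (hΘd z t htI).mono_of_mem_nhdsWithin
              (hIic t ⟨ht.1, ht.2.trans ht₀.2⟩)
          · exact fun _ _ => mem_univ _
          · exact continuousOn_const
          · intro t ht
            simp only [Matrix.mulVec_zero]
            exact hasDerivWithinAt_const t _ _
          · exact fun _ _ => mem_univ _
          · exact hz
        have := key ⟨le_rfl, h0.le⟩
        simpa [hΘ0, Matrix.one_mulVec] using this
    have hinj : Function.Injective (Θ t₀).mulVec := by
      intro x y hxy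
      have h1 : Θ t₀ *ᵥ (x - y) = 0 := by
        rw [Matrix.mulVec_sub]
        rw [show (Θ t₀).mulVec x = (Θ t₀).mulVec y from hxy]
        exact sub_self _
      exact sub_eq_zero.1 (hker _ h1)
    exact ((Matrix.isUnit_iff_isUnit_det _).1
      (Matrix.mulVec_injective_iff_isUnit.1 hinj)).ne_zero
  -- the integrand of the variation-of-constants formula
  set H : ℝ → Fin 3 → ℝ := fun s => ((Θc s).det)⁻¹ • ((Θc s).adjugate *ᵥ Δc s) with hHdef
  have hHc : Continuous H := by
    apply Continuous.fun_smul
    · exact (hΘcc.matrix_det).inv₀ fun s => hdet _ (hπmem s)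
    · exact (hΘcc.matrix_adjugate).matrix_mulVec hΔcc
  set c : ℝ → Fin 3 → ℝ := fun t => ∫ s in (0 : ℝ)..t, H s with hcdef
  have hcd : ∀ t : ℝ, HasDerivAt c (H t) t := by
    intro t
    exact (intervalIntegral.integral_hasStrictDerivAt_right
      (hHc.intervalIntegrable _ _)
      (hHc.stronglyMeasurable.stronglyMeasurableAtFilter)
      hHc.continuousAt).hasDerivAt
  have hc0 : c 0 = 0 := intervalIntegral.integral_same
  -- key algebraic identity: Θ t *ᵥ H t = Δ t on [0, T]
  have hΘH : ∀ t ∈ Icc (0 : ℝ) T, Θ t *ᵥ H t = Δ t := by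
    intro t ht
    have hπt : π t = t := hπeq t ht
    have h1 : Θ t *ᵥ H t = ((Θ t).det)⁻¹ • ((Θ t * (Θ t).adjugate) *ᵥ Δ t) := by
      simp only [hHdef, hΘcdef, hΔcdef, hπt, Matrix.mulVec_smul, Matrix.mulVec_mulVec]
    rw [h1, Matrix.mul_adjugate, Matrix.smul_mulVec, Matrix.one_mulVec,
      smul_smul, inv_mul_cancel₀ (hdet t ht), one_smul]
  -- the family of solutions of the inhomogeneous equation
  have hsol : ∀ c₀ : Fin 3 → ℝ, ∀ t ∈ Icc (0 : ℝ) T,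
      HasDerivWithinAt (fun s => Θ s *ᵥ (c₀ + c s))
        (M t *ᵥ (Θ t *ᵥ (c₀ + c t)) + Δ t) (Icc 0 T) t := by
    intro c₀ t ht
    have hgoal : M t *ᵥ (Θ t *ᵥ (c₀ + c t)) + Δ t
        = (M t * Θ t) *ᵥ (c₀ + c t) + Θ t *ᵥ H t := by
      rw [Matrix.mulVec_mulVec, hΘH t ht]
    rw [hgoal, hasDerivWithinAt_pi]
    intro i
    simp only [Matrix.mulVec, dotProduct, Pi.add_apply]
    have hterm : ∀ j : Fin 3, j ∈ Finset.univ →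
        HasDerivWithinAt (fun s => Θ s i j * (c₀ j + c s j))
          ((M t * Θ t) i j * (c₀ j + c t j) + Θ t i j * H t j) (Icc 0 T) t := by
      intro j _
      exact (hΘ t ht i j).mul
        (((hasDerivAt_pi.1 (hcd t) j).const_add (c₀ j)).hasDerivWithinAt)
    have := HasDerivWithinAt.sum hterm
    rw [Finset.sum_add_distrib] at this
    exact this
  -- choice of the initial value making all three boundary conditions hold
  set γ : ℝ := -(Θ T 2 0 * (ξ + c T 0) + Θ T 2 1 * (ξ₀ + c T 1) + Θ T 2 2 * c T 2)
      / (Θ T 2 2) with hγdef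
  set c₀ : Fin 3 → ℝ := ![ξ, ξ₀, γ] with hc₀def
  set v : ℝ → Fin 3 → ℝ := fun s => Θ s *ᵥ (c₀ + c s) with hvdef
  have hv0 : v 0 = c₀ := by
    simp only [hvdef, hc0, add_zero, hΘ0, Matrix.one_mulVec]
  have hc₀0 : c₀ 0 = ξ := rfl
  have hc₀1 : c₀ 1 = ξ₀ := rfl
  have hc₀2 : c₀ 2 = γ := rfl
  have hvT : v T 2 = 0 := by
    have h1 : v T 2 = ∑ j, Θ T 2 j * (c₀ j + c T j) := by
      simp [hvdef, Matrix.mulVec, dotProduct]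
    rw [h1, Fin.sum_univ_three, hc₀0, hc₀1, hc₀2, hγdef]
    field_simp
    ring
  refine ⟨v, ⟨fun t ht => hsol c₀ t ht, by rw [hv0]; exact hc₀0, by rw [hv0]; exact hc₀1, hvT⟩, ?_⟩
  -- uniqueness
  rintro w ⟨hw', hw0, hw1, hwT⟩
  set d : ℝ → Fin 3 → ℝ := fun s => w s - v s with hddef
  have hd' : ∀ t ∈ Icc (0 : ℝ) T, HasDerivWithinAt d (Mc t *ᵥ d t) (Icc 0 T) t := by
    intro t ht
    have h1 := (hw' t ht).sub (hsol c₀ t ht)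
    have heq : (M t *ᵥ w t + Δ t) - (M t *ᵥ v t + Δ t) = Mc t *ᵥ d t := by
      rw [add_sub_add_right_eq_sub, ← Matrix.mulVec_sub, hMcdef]
      simp only [hπeq t ht, hddef]
    rwa [heq] at h1
  have hkey : EqOn d (fun s => Θ s *ᵥ d 0) (Icc 0 T) := by
    apply ODE_solution_unique_of_mem_Icc_right
      (v := fun t (y : Fin 3 → ℝ) => Mc t *ᵥ y) (s := fun _ => univ) (K := K)
      (fun t _ => hlip t)
    · exact fun t ht => (hd' t ht).continuousWithinAt
    · exact fun t ht => (hd' t (Ico_subset_Icc_self ht)).mono_of_mem_nhdsWithin (hIci t ht)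
    · exact fun _ _ => mem_univ _
    · exact hflowcont (d 0)
    · exact fun t ht =>
        (hΘd (d 0) t (Ico_subset_Icc_self ht)).mono_of_mem_nhdsWithin (hIci t ht)
    · exact fun _ _ => mem_univ _
    · simp [hΘ0, Matrix.one_mulVec]
  have hd00 : d 0 0 = 0 := by
    simp only [hddef, Pi.sub_apply, hw0, hv0, hc₀0, sub_self]
  have hd01 : d 0 1 = 0 := by
    simp only [hddef, Pi.sub_apply, hw1, hv0, hc₀1, sub_self]
  have hd02 : d 0 2 = 0 := by
    have hdT : d T 2 = 0 := by
      simp only [hddef, Pi.sub_apply, hwT, hvT, sub_self]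
    have h1 := hkey hTmem
    have h2 : d T 2 = ∑ j, Θ T 2 j * d 0 j := by
      rw [h1]; simp [Matrix.mulVec, dotProduct]
    rw [hdT, Fin.sum_univ_three, hd00, hd01] at h2
    have h3 : Θ T 2 2 * d 0 2 = 0 := by linarith [h2]
    rcases mul_eq_zero.1 h3 with h | h
    · exact absurd h h33
    · exact h
  have hd0 : d 0 = 0 := by
    funext i
    fin_cases i
    · exact hd00
    · exact hd01
    · exact hd02
  intro t ht
  have h1 := hkey ht
  simp only [hd0, Matrix.mulVec_zero] at h1
  have : w t - v t = 0 := h1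
  exact sub_eq_zero.1 this
end

section
/- (Well-posedness of the Riccati equation (3.10).) Let T > 0 and let A₁, B₁, C₁, C̃₁, D₁, D̃₁, Q₁, R₁ : [0,T] → ℝ be continuous functions such that Q₁(t) ≥ 0 for all t, and there is a constant δ > 0 with R₁(t) ≥ δ for all t; let G₁ ≥ 0 be a real constant. Then there exists a unique differentiable function P₁ : [0,T] → ℝ such that R₁(t) + (D₁(t)² + D̃₁(t)²) P₁(t) > 0 for all t ∈ [0,T], P₁(T) = G₁, and for all t ∈ [0,T]: P₁'(t) + (2A₁(t) + C₁(t)² + C̃₁(t)²) P₁(t) − (B₁(t) + C₁(t)D₁(t) + C̃₁(t)D̃₁(t))² P₁(t)² / (R₁(t) + (D₁(t)² + D̃₁(t)²) P₁(t)) + Q₁(t) = 0. Moreover, this solution satisfies P₁(t) ≥ 0 for every t ∈ [0,T], and hence R₁(t) + (D₁(t)² + D̃₁(t)²) P₁(t) ≥ δ for every t ∈ [0,T]. -/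
open Set

namespace RiccatiAux

open Real

lemma clamp_lip (M x y : ℝ) : |max 0 (min x M) - max 0 (min y M)| ≤ |x - y| := by
  calc |max 0 (min x M) - max 0 (min y M)|
      = |max (min x M) 0 - max (min y M) 0| := by rw [max_comm, max_comm (min y M)]
    _ ≤ |min x M - min y M| := abs_max_sub_max_le_abs _ _ _
    _ ≤ max |x - y| |M - M| := abs_min_sub_min_le_max _ _ _ _
    _ = |x - y| := by simp

lemma riccati_lip (L Mb e aa KK dd RR Qv x y : ℝ)
    (hL : 0 < L) (he : 0 < e) (hKK : 0 ≤ KK) (hdd : 0 ≤ dd)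
    (haa : |aa| ≤ L) (hK : KK ≤ L) (hd : dd ≤ L) (hRR : |RR| ≤ L)
    (hx : |x| ≤ Mb) (hy : |y| ≤ Mb)
    (hdx : e ≤ RR + dd * x) (hdy : e ≤ RR + dd * y) :
    |(aa * x - KK * x ^ 2 / (RR + dd * x) + Qv) - (aa * y - KK * y ^ 2 / (RR + dd * y) + Qv)|
      ≤ (L + L * (2 * L * Mb + L * Mb ^ 2) / e ^ 2) * |x - y| := by
  have hMb0 : 0 ≤ Mb := (abs_nonneg x).trans hx
  have hDx : 0 < RR + dd * x := he.trans_le hdx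
  have hDy : 0 < RR + dd * y := he.trans_le hdy
  have hid : (aa * x - KK * x ^ 2 / (RR + dd * x) + Qv)
        - (aa * y - KK * y ^ 2 / (RR + dd * y) + Qv)
      = (x - y) * (aa - KK * (RR * (x + y) + dd * (x * y)) / ((RR + dd * x) * (RR + dd * y))) := by
    have key : KK * x ^ 2 / (RR + dd * x) - KK * y ^ 2 / (RR + dd * y)
        = (x - y) * (KK * (RR * (x + y) + dd * (x * y)) / ((RR + dd * x) * (RR + dd * y))) := by
      rw [div_sub_div _ _ hDx.ne' hDy.ne', mul_div_assoc']
      congr 1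
      ring
    linear_combination (-1 : ℝ) * key
  rw [hid, abs_mul, mul_comm]
  apply mul_le_mul_of_nonneg_right _ (abs_nonneg _)
  have hN : |RR * (x + y) + dd * (x * y)| ≤ 2 * L * Mb + L * Mb ^ 2 := by
    have h1 : |RR * (x + y)| ≤ L * (Mb + Mb) := by
      rw [abs_mul]
      exact mul_le_mul hRR ((abs_add_le x y).trans (by linarith)) (abs_nonneg _) hL.le
    have h2 : |dd * (x * y)| ≤ L * (Mb * Mb) := by
      rw [abs_mul, abs_mul]
      exact mul_le_mul (by rwa [abs_of_nonneg hdd])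
        (mul_le_mul hx hy (abs_nonneg _) hMb0) (mul_nonneg (abs_nonneg _) (abs_nonneg _)) hL.le
    calc |RR * (x + y) + dd * (x * y)| ≤ |RR * (x + y)| + |dd * (x * y)| := abs_add_le _ _
      _ ≤ L * (Mb + Mb) + L * (Mb * Mb) := add_le_add h1 h2
      _ = 2 * L * Mb + L * Mb ^ 2 := by ring
  have hG : |KK * (RR * (x + y) + dd * (x * y)) / ((RR + dd * x) * (RR + dd * y))|
      ≤ L * (2 * L * Mb + L * Mb ^ 2) / e ^ 2 := by
    rw [abs_div, abs_mul, abs_of_nonneg hKK, abs_of_pos (mul_pos hDx hDy)]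
    apply div_le_div₀ (by positivity)
      (mul_le_mul hK hN (abs_nonneg _) hL.le) (by positivity)
    calc e ^ 2 = e * e := sq e
      _ ≤ (RR + dd * x) * (RR + dd * y) := mul_le_mul hdx hdy he.le hDx.le
  calc |aa - KK * (RR * (x + y) + dd * (x * y)) / ((RR + dd * x) * (RR + dd * y))|
      ≤ |aa| + |KK * (RR * (x + y) + dd * (x * y)) / ((RR + dd * x) * (RR + dd * y))| :=
        abs_sub _ _
    _ ≤ L + L * (2 * L * Mb + L * Mb ^ 2) / e ^ 2 := add_le_add haa hG

set_option maxHeartbeats 1000000 in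
theorem riccati_exists_unique (T : ℝ) (hT : 0 < T) (a dc Kc Q R : ℝ → ℝ)
    (ha : ContinuousOn a (Icc 0 T)) (hdc : ContinuousOn dc (Icc 0 T))
    (hKc : ContinuousOn Kc (Icc 0 T)) (hQ : ContinuousOn Q (Icc 0 T))
    (hR : ContinuousOn R (Icc 0 T))
    (hd0 : ∀ t ∈ Icc (0:ℝ) T, 0 ≤ dc t) (hK0 : ∀ t ∈ Icc (0:ℝ) T, 0 ≤ Kc t)
    (hQ0 : ∀ t ∈ Icc (0:ℝ) T, 0 ≤ Q t)
    (δ : ℝ) (hδ : 0 < δ) (hRδ : ∀ t ∈ Icc (0:ℝ) T, δ ≤ R t)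
    (G : ℝ) (hG : 0 ≤ G) :
    ∃ P : ℝ → ℝ,
      ((∀ t ∈ Icc (0:ℝ) T, 0 < R t + dc t * P t) ∧
        P T = G ∧
        ∀ t ∈ Icc (0:ℝ) T,
          HasDerivWithinAt P
            (-(a t * P t - Kc t * (P t) ^ 2 / (R t + dc t * P t) + Q t)) (Icc 0 T) t) ∧
      (∀ P' : ℝ → ℝ,
        ((∀ t ∈ Icc (0:ℝ) T, 0 < R t + dc t * P' t) ∧
          P' T = G ∧
          ∀ t ∈ Icc (0:ℝ) T,
            HasDerivWithinAt P'
              (-(a t * P' t - Kc t * (P' t) ^ 2 / (R t + dc t * P' t) + Q t)) (Icc 0 T) t) →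
        EqOn P' P (Icc 0 T)) ∧
      (∀ t ∈ Icc (0:ℝ) T, 0 ≤ P t) ∧
      (∀ t ∈ Icc (0:ℝ) T, δ ≤ R t + dc t * P t) := by
  -- uniform bound L on coefficients
  obtain ⟨L₀, hL₀⟩ := (isCompact_Icc : IsCompact (Icc (0:ℝ) T)).exists_bound_of_continuousOn
    (f := fun t => |a t| + dc t + Kc t + Q t + |R t|)
    ((((ha.abs.add hdc).add hKc).add hQ).add hR.abs)
  set L : ℝ := max 1 L₀ with hLdef
  have hL1 : (1:ℝ) ≤ L := le_max_left _ _
  have hL : (0:ℝ) < L := lt_of_lt_of_le one_pos hL1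
  have hsum : ∀ t ∈ Icc (0:ℝ) T, |a t| + dc t + Kc t + Q t + |R t| ≤ L := by
    intro t ht
    have h := hL₀ t ht
    rw [Real.norm_eq_abs] at h
    exact (le_abs_self _).trans (h.trans (le_max_right _ _))
  have haL : ∀ t ∈ Icc (0:ℝ) T, |a t| ≤ L := by
    intro t ht
    have := hsum t ht; have := hd0 t ht; have := hK0 t ht; have := hQ0 t ht
    have := abs_nonneg (R t); linarith
  have hdL : ∀ t ∈ Icc (0:ℝ) T, dc t ≤ L := by
    intro t ht
    have := hsum t ht; have := abs_nonneg (a t); have := hK0 t ht; have := hQ0 t ht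
    have := abs_nonneg (R t); linarith
  have hKL : ∀ t ∈ Icc (0:ℝ) T, Kc t ≤ L := by
    intro t ht
    have := hsum t ht; have := abs_nonneg (a t); have := hd0 t ht; have := hQ0 t ht
    have := abs_nonneg (R t); linarith
  have hQL : ∀ t ∈ Icc (0:ℝ) T, Q t ≤ L := by
    intro t ht
    have := hsum t ht; have := abs_nonneg (a t); have := hd0 t ht; have := hK0 t ht
    have := abs_nonneg (R t); linarith
  have hRL : ∀ t ∈ Icc (0:ℝ) T, |R t| ≤ L := by
    intro t ht
    have := hsum t ht; have := abs_nonneg (a t); have := hd0 t ht; have := hK0 t ht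
    have := hQ0 t ht; linarith
  -- a priori bound M
  set M : ℝ := (G + 1) * Real.exp (2 * L * T) with hMdef
  have hexp1 : (1:ℝ) ≤ Real.exp (2 * L * T) := by
    rw [← Real.exp_zero]
    exact Real.exp_le_exp.mpr (by positivity)
  have hM1 : G + 1 ≤ M := le_mul_of_one_le_right (by linarith) hexp1
  have hM0 : 0 < M := by nlinarith
  -- denominator bound
  have hden : ∀ t ∈ Icc (0:ℝ) T, ∀ z : ℝ, 0 ≤ z → δ ≤ R t + dc t * z := by
    intro t ht z hz
    have := hRδ t ht
    have := mul_nonneg (hd0 t ht) hz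
    linarith
  -- clamp facts
  have hcl_mem : ∀ x : ℝ, 0 ≤ max 0 (min x M) ∧ max 0 (min x M) ≤ M :=
    fun x => ⟨le_max_left _ _, max_le hM0.le (min_le_right _ _)⟩
  have hcl_id : ∀ x : ℝ, 0 ≤ x → x ≤ M → max 0 (min x M) = x := by
    intro x h0 hM
    rw [min_eq_left hM, max_eq_right h0]
  -- the truncated vector field
  set v : ℝ → ℝ → ℝ := fun t x =>
    -(a t * max 0 (min x M) - Kc t * (max 0 (min x M)) ^ 2
        / (R t + dc t * max 0 (min x M)) + Q t) with hvdef
  set lip : ℝ := L + L * (2 * L * M + L * M ^ 2) / δ ^ 2 with hlipdef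
  have hlip0 : 0 ≤ lip := by positivity
  have hvlip : ∀ t ∈ Icc (0:ℝ) T, LipschitzWith lip.toNNReal (v t) := by
    intro t ht
    apply LipschitzWith.of_dist_le_mul
    intro x y
    rw [Real.dist_eq, Real.dist_eq, Real.coe_toNNReal _ hlip0]
    have hx := hcl_mem x
    have hy := hcl_mem y
    have key := riccati_lip L M δ (a t) (Kc t) (dc t) (R t) (Q t)
      (max 0 (min x M)) (max 0 (min y M)) hL hδ (hK0 t ht) (hd0 t ht)
      (haL t ht) (hKL t ht) (hdL t ht) (hRL t ht)
      (by rw [abs_of_nonneg hx.1]; exact hx.2) (by rw [abs_of_nonneg hy.1]; exact hy.2)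
      (hden t ht _ hx.1) (hden t ht _ hy.1)
    calc |v t x - v t y|
        = |(a t * max 0 (min x M) - Kc t * (max 0 (min x M)) ^ 2
              / (R t + dc t * max 0 (min x M)) + Q t)
          - (a t * max 0 (min y M) - Kc t * (max 0 (min y M)) ^ 2
              / (R t + dc t * max 0 (min y M)) + Q t)| := by
          rw [hvdef]; dsimp only; rw [neg_sub_neg, abs_sub_comm]
      _ ≤ lip * |max 0 (min x M) - max 0 (min y M)| := key
      _ ≤ lip * |x - y| := mul_le_mul_of_nonneg_left (clamp_lip M x y) hlip0
  -- norm bound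
  set C₀ : ℝ := L * M + L * M ^ 2 / δ + L with hC₀def
  have hC₀ : 0 < C₀ := by positivity
  have hvnorm : ∀ t ∈ Icc (0:ℝ) T, ∀ x : ℝ, ‖v t x‖ ≤ C₀ := by
    intro t ht x
    have hx := hcl_mem x
    have hdx : δ ≤ R t + dc t * max 0 (min x M) := hden t ht _ hx.1
    have h1 : |a t * max 0 (min x M)| ≤ L * M := by
      rw [abs_mul]
      exact mul_le_mul (haL t ht) (by rw [abs_of_nonneg hx.1]; exact hx.2)
        (abs_nonneg _) hL.le
    have h2 : |Kc t * (max 0 (min x M)) ^ 2 / (R t + dc t * max 0 (min x M))|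
        ≤ L * M ^ 2 / δ := by
      rw [abs_div, abs_mul, abs_of_nonneg (hK0 t ht), abs_of_pos (hδ.trans_le hdx),
        abs_of_nonneg (sq_nonneg _)]
      apply div_le_div₀ (by positivity) _ hδ hdx
      exact mul_le_mul (hKL t ht) (by nlinarith [hx.1, hx.2]) (sq_nonneg _) hL.le
    have h3 : |Q t| ≤ L := by rw [abs_of_nonneg (hQ0 t ht)]; exact hQL t ht
    rw [Real.norm_eq_abs, hvdef]
    dsimp only
    rw [abs_neg]
    calc |a t * max 0 (min x M) - Kc t * (max 0 (min x M)) ^ 2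
            / (R t + dc t * max 0 (min x M)) + Q t|
        ≤ |a t * max 0 (min x M) - Kc t * (max 0 (min x M)) ^ 2
            / (R t + dc t * max 0 (min x M))| + |Q t| := abs_add_le _ _
      _ ≤ (|a t * max 0 (min x M)| + |Kc t * (max 0 (min x M)) ^ 2
            / (R t + dc t * max 0 (min x M))|) + |Q t| := by
          gcongr; exact abs_sub _ _
      _ ≤ (L * M + L * M ^ 2 / δ) + L := by gcongr
      _ = C₀ := by rw [hC₀def]
  -- Picard–Lindelöf existence for the truncated field
  have hpl : IsPicardLindelof v (tmin := 0) (tmax := T) ⟨T, right_mem_Icc.mpr hT.le⟩ G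
      (C₀ * T).toNNReal 0 C₀.toNNReal lip.toNNReal :=
    { lipschitzOnWith := fun t ht => (hvlip t ht).lipschitzOnWith
      continuousOn := by
        intro x _
        have hne : ∀ t ∈ Icc (0:ℝ) T, R t + dc t * max 0 (min x M) ≠ 0 := fun t ht =>
          ne_of_gt (hδ.trans_le (hden t ht _ (hcl_mem x).1))
        exact (((ha.mul continuousOn_const).sub
          (((hKc.mul continuousOn_const)).div
            (hR.add (hdc.mul continuousOn_const)) hne)).add hQ).neg
      norm_le := fun t ht x _ => by rw [Real.coe_toNNReal _ hC₀.le]; exact hvnorm t ht x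
      mul_max_le := by
        simp only [sub_self, sub_zero, max_eq_right hT.le, NNReal.coe_zero,
          Real.coe_toNNReal _ hC₀.le, Real.coe_toNNReal _ (by positivity : (0:ℝ) ≤ C₀ * T)]
        exact le_rfl }
  obtain ⟨q, hqT, hq'⟩ := hpl.exists_eq_forall_mem_Icc_hasDerivWithinAt₀
  replace hqT : q T = G := hqT
  have hqc : ContinuousOn q (Icc 0 T) := fun t ht => (hq' t ht).continuousWithinAt
  have hmaps : MapsTo (fun s : ℝ => T - s) (Icc 0 T) (Icc 0 T) := by
    intro s hs
    rw [mem_Icc] at hs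
    show T - s ∈ Icc 0 T
    rw [mem_Icc]
    exact ⟨by linarith [hs.2], by linarith [hs.1]⟩
  -- reversed derivative
  have hrd : ∀ s ∈ Icc (0:ℝ) T,
      HasDerivWithinAt (fun s => q (T - s)) (-(v (T - s) (q (T - s)))) (Icc 0 T) s := by
    intro s hs
    have h1 : HasDerivWithinAt (fun s : ℝ => T - s) (-1) (Icc 0 T) s :=
      ((hasDerivAt_id s).const_sub T).hasDerivWithinAt
    have := HasDerivWithinAt.comp s (hq' (T - s) (hmaps hs)) h1 hmaps
    simpa [Function.comp_def, mul_comm] using this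
  have hIci : ∀ s ∈ Ico (0:ℝ) T, ∀ {f : ℝ → ℝ} {d : ℝ},
      HasDerivWithinAt f d (Icc 0 T) s → HasDerivWithinAt f d (Ici s) s := by
    intro s hs f d h
    exact h.mono_of_mem_nhdsWithin (Filter.mem_of_superset
      (Icc_mem_nhdsGE hs.2) (Icc_subset_Icc hs.1 le_rfl))
  have hrc : ContinuousOn (fun s => q (T - s)) (Icc 0 T) :=
    hqc.comp ((continuous_const.sub continuous_id).continuousOn) hmaps
  -- upper bound on q
  have hubr : ∀ s ∈ Icc (0:ℝ) T, q (T - s) ≤ (G + 1) * Real.exp (2 * L * s) - 1 := by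
    apply image_le_of_deriv_right_lt_deriv_boundary (f' := fun s => -(v (T - s) (q (T - s))))
      (B' := fun s => (G + 1) * (Real.exp (2 * L * s) * (2 * L))) hrc
      (fun s hs => hIci s hs (hrd s (Ico_subset_Icc_self hs)))
      (by simp [hqT])
      (fun x => by
        have hlin : HasDerivAt (fun s : ℝ => 2 * L * s) (2 * L) x := by
          simpa using (hasDerivAt_id x).const_mul (2 * L)
        exact (hlin.exp.const_mul (G + 1)).sub_const 1)
    intro s hs hcontact
    have hsIcc : s ∈ Icc (0:ℝ) T := Ico_subset_Icc_self hs
    have ht' : T - s ∈ Icc (0:ℝ) T := hmaps hsIcc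
    have hE : (1:ℝ) ≤ Real.exp (2 * L * s) := by
      rw [← Real.exp_zero]; exact Real.exp_le_exp.mpr (by nlinarith [hs.1])
    have hE' : Real.exp (2 * L * s) ≤ Real.exp (2 * L * T) :=
      Real.exp_le_exp.mpr (by nlinarith [hs.2.le])
    have hBs0 : 0 ≤ (G + 1) * Real.exp (2 * L * s) - 1 := by nlinarith
    have hBsM : (G + 1) * Real.exp (2 * L * s) - 1 ≤ M := by
      rw [hMdef]; nlinarith
    have hq0 : 0 ≤ q (T - s) := hcontact ▸ hBs0
    have hqM : q (T - s) ≤ M := hcontact ▸ hBsM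
    have hcl : max 0 (min (q (T - s)) M) = q (T - s) := hcl_id _ hq0 hqM
    have hdenq : δ ≤ R (T - s) + dc (T - s) * q (T - s) := hden _ ht' _ hq0
    have hexpand : -(v (T - s) (q (T - s)))
        = a (T - s) * q (T - s) - Kc (T - s) * (q (T - s)) ^ 2
            / (R (T - s) + dc (T - s) * q (T - s)) + Q (T - s) := by
      rw [hvdef]; dsimp only; rw [hcl, neg_neg]
    rw [hexpand]
    have h1 : a (T - s) * q (T - s) ≤ L * q (T - s) :=
      mul_le_mul_of_nonneg_right ((le_abs_self _).trans (haL _ ht')) hq0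
    have h2 : 0 ≤ Kc (T - s) * (q (T - s)) ^ 2 / (R (T - s) + dc (T - s) * q (T - s)) :=
      div_nonneg (mul_nonneg (hK0 _ ht') (sq_nonneg _)) (hδ.le.trans hdenq)
    have h3 : Q (T - s) ≤ L := hQL _ ht'
    have hEpos : 0 < Real.exp (2 * L * s) := Real.exp_pos _
    have h4 : a (T - s) * q (T - s) - Kc (T - s) * (q (T - s)) ^ 2
        / (R (T - s) + dc (T - s) * q (T - s)) + Q (T - s) ≤ L * q (T - s) + L := by
      linarith
    have h5 : L * q (T - s) + L
        < (G + 1) * (Real.exp (2 * L * s) * (2 * L)) := by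
      rw [hcontact]; nlinarith
    linarith
  -- lower bound on q
  have hlb : ∀ t ∈ Icc (0:ℝ) T, 0 ≤ q t := by
    have key : ∀ ε : ℝ, 0 < ε → ∀ s ∈ Icc (0:ℝ) T, -q (T - s) ≤ ε * Real.exp s := by
      intro ε hε
      apply image_le_of_deriv_right_lt_deriv_boundary
        (f' := fun s => v (T - s) (q (T - s)))
        (B' := fun s => ε * Real.exp s) hrc.neg
        (fun s hs => hIci s hs (by simpa using (hrd s (Ico_subset_Icc_self hs)).neg))
        (by simp [hqT]; linarith)
        (fun x => (Real.hasDerivAt_exp x).const_mul ε)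
      intro s hs hcontact
      have hsIcc : s ∈ Icc (0:ℝ) T := Ico_subset_Icc_self hs
      have ht' : T - s ∈ Icc (0:ℝ) T := hmaps hsIcc
      have hEpos : 0 < Real.exp s := Real.exp_pos _
      have hqneg : q (T - s) < 0 := by simp only [Pi.neg_apply] at hcontact; nlinarith [hcontact]
      have hcl : max 0 (min (q (T - s)) M) = 0 := by
        rw [min_eq_left (by linarith), max_eq_left (by linarith)]
      have hve : v (T - s) (q (T - s)) = -Q (T - s) := by
        rw [hvdef]; dsimp only; rw [hcl]; norm_num
      rw [hve]
      have := hQ0 _ ht'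
      nlinarith
    intro t ht
    have hTt : T - t ∈ Icc (0:ℝ) T := hmaps ht
    have h2 : ∀ ε : ℝ, 0 < ε → -q t ≤ ε := by
      intro ε hε
      have := key (ε / Real.exp (T - t)) (by positivity) (T - t) hTt
      rw [sub_sub_cancel, div_mul_cancel₀ _ (Real.exp_ne_zero _)] at this
      exact this
    by_contra h
    push_neg at h
    have := h2 (-q t / 2) (by linarith)
    linarith
  have hub : ∀ t ∈ Icc (0:ℝ) T, q t ≤ M - 1 := by
    intro t ht
    have hTt : T - t ∈ Icc (0:ℝ) T := hmaps ht
    have := hubr (T - t) hTt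
    rw [sub_sub_cancel] at this
    have hE' : Real.exp (2 * L * (T - t)) ≤ Real.exp (2 * L * T) :=
      Real.exp_le_exp.mpr (by nlinarith [ht.1, hTt.2])
    rw [hMdef]
    nlinarith
  -- q solves the true equation
  have hq'' : ∀ t ∈ Icc (0:ℝ) T, HasDerivWithinAt q
      (-(a t * q t - Kc t * (q t) ^ 2 / (R t + dc t * q t) + Q t)) (Icc 0 T) t := by
    intro t ht
    have hcl : max 0 (min (q t) M) = q t :=
      hcl_id _ (hlb t ht) ((hub t ht).trans (by linarith))
    have h := hq' t ht
    rw [hvdef] at h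
    dsimp only at h
    rw [hcl] at h
    exact h
  have hqden : ∀ t ∈ Icc (0:ℝ) T, δ ≤ R t + dc t * q t :=
    fun t ht => hden t ht _ (hlb t ht)
  refine ⟨q, ⟨fun t ht => hδ.trans_le (hqden t ht), hqT, hq''⟩, ?_, hlb, hqden⟩
  -- uniqueness
  rintro P' ⟨hPden, hPT, hP'⟩
  have hPc : ContinuousOn P' (Icc 0 T) := fun t ht => (hP' t ht).continuousWithinAt
  obtain ⟨M₁, hM₁⟩ := (isCompact_Icc : IsCompact (Icc (0:ℝ) T)).exists_bound_of_continuousOn hPc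
  have hdenc : ContinuousOn (fun t => R t + dc t * P' t) (Icc 0 T) :=
    hR.add (hdc.mul hPc)
  obtain ⟨t₀, ht₀, hmin⟩ := (isCompact_Icc : IsCompact (Icc (0:ℝ) T)).exists_isMinOn
    (nonempty_Icc.mpr hT.le) hdenc
  set ε₁ : ℝ := R t₀ + dc t₀ * P' t₀ with hε₁def
  have hε₁ : 0 < ε₁ := hPden t₀ ht₀
  set ε₀ : ℝ := min ε₁ δ with hε₀def
  have hε₀ : 0 < ε₀ := lt_min hε₁ hδ
  set M' : ℝ := max M M₁ with hM'def
  have hM'M : M ≤ M' := le_max_left _ _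
  set lip' : ℝ := L + L * (2 * L * M' + L * M' ^ 2) / ε₀ ^ 2 with hlip'def
  have hlip'0 : 0 ≤ lip' := by positivity
  set w : ℝ → ℝ → ℝ := fun t x => -(a t * x - Kc t * x ^ 2 / (R t + dc t * x) + Q t) with hwdef
  set sset : ℝ → Set ℝ :=
    fun t => {x | |x| ≤ M' ∧ ε₀ ≤ R t + dc t * x ∧ t ∈ Icc (0:ℝ) T} with hssetdef
  have hw : ∀ t, LipschitzOnWith lip'.toNNReal (w t) (sset t) := by
    intro t
    rw [lipschitzOnWith_iff_dist_le_mul]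
    intro x hx y hy
    obtain ⟨hx1, hx2, htIcc⟩ := hx
    obtain ⟨hy1, hy2, -⟩ := hy
    rw [Real.dist_eq, Real.dist_eq, Real.coe_toNNReal _ hlip'0]
    have key := riccati_lip L M' ε₀ (a t) (Kc t) (dc t) (R t) (Q t) x y hL hε₀
      (hK0 t htIcc) (hd0 t htIcc) (haL t htIcc) (hKL t htIcc) (hdL t htIcc) (hRL t htIcc)
      hx1 hy1 hx2 hy2
    calc |w t x - w t y|
        = |(a t * x - Kc t * x ^ 2 / (R t + dc t * x) + Q t)
            - (a t * y - Kc t * y ^ 2 / (R t + dc t * y) + Q t)| := by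
          rw [hwdef]; dsimp only; rw [neg_sub_neg, abs_sub_comm]
      _ ≤ lip' * |x - y| := key
  have hIic : ∀ t ∈ Ioc (0:ℝ) T, ∀ {f : ℝ → ℝ} {d : ℝ},
      HasDerivWithinAt f d (Icc 0 T) t → HasDerivWithinAt f d (Iic t) t := by
    intro t ht f d h
    exact h.mono_of_mem_nhdsWithin (Filter.mem_of_superset
      (Icc_mem_nhdsLE ht.1) (Icc_subset_Icc le_rfl ht.2))
  apply ODE_solution_unique_of_mem_Icc_left (fun t _ => hw t) hPc
    (fun t ht => hIic t ht (hP' t (Ioc_subset_Icc_self ht)))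
    (fun t ht => by
      have htI := Ioc_subset_Icc_self ht
      refine ⟨?_, ?_, htI⟩
      · exact (Real.norm_eq_abs _ ▸ hM₁ t htI).trans (le_max_right _ _)
      · exact (min_le_left _ _).trans (hmin htI))
    hqc
    (fun t ht => hIic t ht (hq'' t (Ioc_subset_Icc_self ht)))
    (fun t ht => by
      have htI := Ioc_subset_Icc_self ht
      refine ⟨?_, ?_, htI⟩
      · refine (abs_le.mpr ⟨by linarith [hlb t htI, hM0], by linarith [hub t htI]⟩).trans hM'M
      · exact (min_le_right _ _).trans (hden t htI _ (hlb t htI)))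
    (hPT.trans hqT.symm)

end RiccatiAux

/-- Well-posedness of the Riccati equation (3.10): under nonnegativity of
`Q₁`, uniform positivity of `R₁` and `G₁ ≥ 0`, the terminal value problem
`P₁' + (2A₁ + C₁² + C̃₁²) P₁ − (B₁ + C₁D₁ + C̃₁D̃₁)² P₁² / (R₁ + (D₁² + D̃₁²) P₁) + Q₁ = 0`,
`P₁(T) = G₁`, has a unique solution keeping the denominator positive;
moreover the solution is nonnegative and the denominator stays `≥ δ`. -/
theorem riccati_P1_exists_unique
    (T : ℝ) (hT : 0 < T)
    (A₁ B₁ C₁ Ct₁ D₁ Dt₁ Q₁ R₁ : ℝ → ℝ)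
    (hA₁ : ContinuousOn A₁ (Icc 0 T)) (hB₁ : ContinuousOn B₁ (Icc 0 T))
    (hC₁ : ContinuousOn C₁ (Icc 0 T)) (hCt₁ : ContinuousOn Ct₁ (Icc 0 T))
    (hD₁ : ContinuousOn D₁ (Icc 0 T)) (hDt₁ : ContinuousOn Dt₁ (Icc 0 T))
    (hQ₁ : ContinuousOn Q₁ (Icc 0 T)) (hR₁ : ContinuousOn R₁ (Icc 0 T))
    (hQ₁pos : ∀ t ∈ Icc (0 : ℝ) T, 0 ≤ Q₁ t)
    (δ : ℝ) (hδ : 0 < δ)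
    (hR₁pos : ∀ t ∈ Icc (0 : ℝ) T, δ ≤ R₁ t)
    (G₁ : ℝ) (hG₁ : 0 ≤ G₁) :
    ∃ P₁ : ℝ → ℝ,
      ((∀ t ∈ Icc (0 : ℝ) T, 0 < R₁ t + ((D₁ t) ^ 2 + (Dt₁ t) ^ 2) * P₁ t) ∧
        P₁ T = G₁ ∧
        ∀ t ∈ Icc (0 : ℝ) T,
          HasDerivWithinAt P₁
            (-((2 * A₁ t + (C₁ t) ^ 2 + (Ct₁ t) ^ 2) * P₁ t
              - (B₁ t + C₁ t * D₁ t + Ct₁ t * Dt₁ t) ^ 2 * (P₁ t) ^ 2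
                / (R₁ t + ((D₁ t) ^ 2 + (Dt₁ t) ^ 2) * P₁ t)
              + Q₁ t)) (Icc 0 T) t) ∧
      (∀ P₁' : ℝ → ℝ,
        ((∀ t ∈ Icc (0 : ℝ) T, 0 < R₁ t + ((D₁ t) ^ 2 + (Dt₁ t) ^ 2) * P₁' t) ∧
          P₁' T = G₁ ∧
          ∀ t ∈ Icc (0 : ℝ) T,
            HasDerivWithinAt P₁'
              (-((2 * A₁ t + (C₁ t) ^ 2 + (Ct₁ t) ^ 2) * P₁' t
                - (B₁ t + C₁ t * D₁ t + Ct₁ t * Dt₁ t) ^ 2 * (P₁' t) ^ 2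
                  / (R₁ t + ((D₁ t) ^ 2 + (Dt₁ t) ^ 2) * P₁' t)
                + Q₁ t)) (Icc 0 T) t) →
        EqOn P₁' P₁ (Icc 0 T)) ∧
      (∀ t ∈ Icc (0 : ℝ) T, 0 ≤ P₁ t) ∧
      (∀ t ∈ Icc (0 : ℝ) T, δ ≤ R₁ t + ((D₁ t) ^ 2 + (Dt₁ t) ^ 2) * P₁ t) := by
  have ha : ContinuousOn (fun t => 2 * A₁ t + (C₁ t) ^ 2 + (Ct₁ t) ^ 2) (Icc 0 T) :=
    ((continuousOn_const.mul hA₁).add (hC₁.pow 2)).add (hCt₁.pow 2)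
  have hdc : ContinuousOn (fun t => (D₁ t) ^ 2 + (Dt₁ t) ^ 2) (Icc 0 T) :=
    (hD₁.pow 2).add (hDt₁.pow 2)
  have hKc : ContinuousOn (fun t => (B₁ t + C₁ t * D₁ t + Ct₁ t * Dt₁ t) ^ 2) (Icc 0 T) :=
    ((hB₁.add (hC₁.mul hD₁)).add (hCt₁.mul hDt₁)).pow 2
  have hd0 : ∀ t ∈ Icc (0:ℝ) T, 0 ≤ (D₁ t) ^ 2 + (Dt₁ t) ^ 2 := fun t _ => by positivity
  have hK0 : ∀ t ∈ Icc (0:ℝ) T, 0 ≤ (B₁ t + C₁ t * D₁ t + Ct₁ t * Dt₁ t) ^ 2 :=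
    fun t _ => sq_nonneg _
  exact RiccatiAux.riccati_exists_unique T hT
    (fun t => 2 * A₁ t + (C₁ t) ^ 2 + (Ct₁ t) ^ 2)
    (fun t => (D₁ t) ^ 2 + (Dt₁ t) ^ 2)
    (fun t => (B₁ t + C₁ t * D₁ t + Ct₁ t * Dt₁ t) ^ 2)
    Q₁ R₁ ha hdc hKc hQ₁ hR₁ hd0 hK0 hQ₁pos δ hδ hR₁pos G₁ hG₁
end

section
/- (Well-posedness of the Riccati equation (3.11) under Assumption 3.3.) Let T > 0 and let A₁, B₁, C₁, C̃₁, D₁, D̃₁, E₁, F₁, F̃₁, Q₁, R₁ : [0,T] → ℝ be continuous with Q₁(t) ≥ 0 and R₁(t) ≥ δ for some δ > 0; let λ ∈ [0,1]. Let P₁ : [0,T] → ℝ be a differentiable nonnegative function solving P₁'(t) + (2A₁ + C₁² + C̃₁²) P₁ − (B₁ + C₁D₁ + C̃₁D̃₁)² P₁² / ℛ₁ + Q₁ = 0 with P₁(T) = G₁ ≥ 0, where ℛ₁(t) := R₁(t) + (D₁(t)² + D̃₁(t)²) P₁(t) ≥ δ. Assume (Assumption 3.3) that for all t ∈ [0,T]: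 P₁ (E₁ + C₁F₁ + C̃₁F̃₁) − (B₁ + C₁D₁ + C̃₁D̃₁) P₁² ℛ₁⁻¹ (D₁F₁ + D̃₁F̃₁) − Q₁(1−λ) ≥ 0. Then there exists a unique differentiable function P₂ : [0,T] → ℝ with P₂(T) = 0 satisfying, for all t ∈ [0,T]: P₂'(t) + P₂ [ 2A₁ + E₁ − 2(B₁ + C₁D₁ + C̃₁D̃₁) P₁ ℛ₁⁻¹ B₁ − (D₁F₁ + D̃₁F̃₁) B₁ P₁ ] − B₁² ℛ₁⁻¹ P₂² + P₁ (E₁ + C₁F₁ + C̃₁F̃₁) − (B₁ + C₁D₁ + C̃₁D̃₁) P₁² ℛ₁⁻¹ (D₁F₁ + D̃₁F̃₁) − Q₁(1−λ) = 0. Moreover this solution satisfies P₂(t) ≥ 0 for all t ∈ [0,T]. -/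
open Set

open Real in

open Set Real

/-- Uniqueness for the scalar Riccati terminal value problem. -/
theorem riccati_unique_aux (T : ℝ) (a b c : ℝ → ℝ)
    (ha : ContinuousOn a (Icc 0 T)) (hb : ContinuousOn b (Icc 0 T))
    (f g : ℝ → ℝ) (hfT : f T = 0) (hgT : g T = 0)
    (hfd : ∀ t ∈ Icc (0:ℝ) T,
      HasDerivWithinAt f (-(f t * a t - b t * (f t)^2 + c t)) (Icc 0 T) t)
    (hgd : ∀ t ∈ Icc (0:ℝ) T,
      HasDerivWithinAt g (-(g t * a t - b t * (g t)^2 + c t)) (Icc 0 T) t) :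
    EqOn f g (Icc 0 T) := by
  rcases le_or_gt T 0 with hT | hT
  · intro t ht
    have h1 : t = T := le_antisymm ht.2 (hT.trans ht.1)
    rw [h1, hfT, hgT]
  -- continuity and bounds
  have hfc : ContinuousOn f (Icc 0 T) := fun t ht => (hfd t ht).continuousWithinAt
  have hgc : ContinuousOn g (Icc 0 T) := fun t ht => (hgd t ht).continuousWithinAt
  obtain ⟨Rf, hRf⟩ := isCompact_Icc.exists_bound_of_continuousOn hfc
  obtain ⟨Rg, hRg⟩ := isCompact_Icc.exists_bound_of_continuousOn hgc
  obtain ⟨Ka₀, hKa₀⟩ := isCompact_Icc.exists_bound_of_continuousOn ha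
  obtain ⟨Kb₀, hKb₀⟩ := isCompact_Icc.exists_bound_of_continuousOn hb
  set R : ℝ := max (max Rf Rg) 0 with hRdef
  have hR0 : 0 ≤ R := le_max_right _ _
  have hfR : ∀ t ∈ Icc (0:ℝ) T, |f t| ≤ R := fun t ht =>
    (hRf t ht).trans ((le_max_left _ _).trans (le_max_left _ _))
  have hgR : ∀ t ∈ Icc (0:ℝ) T, |g t| ≤ R := fun t ht =>
    (hRg t ht).trans ((le_max_right _ _).trans (le_max_left _ _))
  set Ka : ℝ := max Ka₀ 0 with hKadef
  set Kb : ℝ := max Kb₀ 0 with hKbdef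
  have hKa0 : 0 ≤ Ka := le_max_right _ _
  have hKb0 : 0 ≤ Kb := le_max_right _ _
  have hKa : ∀ t ∈ Icc (0:ℝ) T, |a t| ≤ Ka := fun t ht => (hKa₀ t ht).trans (le_max_left _ _)
  have hKb : ∀ t ∈ Icc (0:ℝ) T, |b t| ≤ Kb := fun t ht => (hKb₀ t ht).trans (le_max_left _ _)
  set v : ℝ → ℝ → ℝ := fun t x =>
    if t ∈ Icc (0:ℝ) T then -(x * a t - b t * x^2 + c t) else 0 with hvdef
  set K : NNReal := Real.toNNReal (Ka + 2 * Kb * R) with hKdef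
  have hKcoe : (K : ℝ) = Ka + 2 * Kb * R := by
    rw [hKdef, Real.coe_toNNReal]
    positivity
  have hv : ∀ t, LipschitzOnWith K (v t) (Metric.closedBall 0 R) := by
    intro t
    by_cases ht : t ∈ Icc (0:ℝ) T
    · rw [lipschitzOnWith_iff_dist_le_mul]
      intro x hx y hy
      rw [mem_closedBall_zero_iff] at hx hy
      simp only [hvdef, if_pos ht, Real.dist_eq, Real.norm_eq_abs] at *
      have key : -(x * a t - b t * x^2 + c t) - -(y * a t - b t * y^2 + c t)
          = (a t - b t * (x + y)) * (y - x) := by ring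
      rw [key, abs_mul, hKcoe]
      have h1 : |a t - b t * (x + y)| ≤ Ka + 2 * Kb * R := by
        calc |a t - b t * (x + y)| ≤ |a t| + |b t| * |x + y| := by
              rw [← abs_mul]; exact abs_sub _ _
          _ ≤ Ka + Kb * (|x| + |y|) := by
              have := abs_add_le x y
              have h2 : |b t| * |x + y| ≤ Kb * (|x| + |y|) := by
                apply mul_le_mul (hKb t ht) (abs_add_le x y) (abs_nonneg _) hKb0
              linarith [hKa t ht]
          _ ≤ Ka + 2 * Kb * R := by nlinarith
      have h2 : |y - x| = |x - y| := abs_sub_comm y x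
      rw [h2]
      exact mul_le_mul_of_nonneg_right h1 (abs_nonneg _)
    · simp only [hvdef, if_neg ht]
      exact ((LipschitzWith.const 0).weaken zero_le).lipschitzOnWith
  have hmemIic : ∀ t ∈ Ioc (0:ℝ) T, Icc (0:ℝ) T ∈ nhdsWithin t (Iic t) := by
    intro t ht
    rw [mem_nhdsWithin]
    exact ⟨Ioi 0, isOpen_Ioi, ht.1, fun s hs => ⟨hs.1.le, hs.2.trans ht.2⟩⟩
  have hfd' : ∀ t ∈ Ioc (0:ℝ) T, HasDerivWithinAt f (v t (f t)) (Iic t) t := by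
    intro t ht
    have h1 := (hfd t ⟨ht.1.le, ht.2⟩).mono_of_mem_nhdsWithin (hmemIic t ht)
    simpa only [hvdef, if_pos (show t ∈ Icc (0:ℝ) T from ⟨ht.1.le, ht.2⟩)] using h1
  have hgd' : ∀ t ∈ Ioc (0:ℝ) T, HasDerivWithinAt g (v t (g t)) (Iic t) t := by
    intro t ht
    have h1 := (hgd t ⟨ht.1.le, ht.2⟩).mono_of_mem_nhdsWithin (hmemIic t ht)
    simpa only [hvdef, if_pos (show t ∈ Icc (0:ℝ) T from ⟨ht.1.le, ht.2⟩)] using h1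
  exact ODE_solution_unique_of_mem_Icc_left (fun t _ => hv t)
    (s := fun _ => Metric.closedBall 0 R) hfc hfd'
    (fun t ht => by rw [mem_closedBall_zero_iff]; exact hfR t ⟨ht.1.le, ht.2⟩)
    hgc hgd'
    (fun t ht => by rw [mem_closedBall_zero_iff]; exact hgR t ⟨ht.1.le, ht.2⟩)
    (hfT.trans hgT.symm)


open Real in
theorem riccati_exists_aux (T : ℝ) (hT : 0 < T) (a b c : ℝ → ℝ)
    (ha : ContinuousOn a (Icc 0 T)) (hb : ContinuousOn b (Icc 0 T))
    (hc : ContinuousOn c (Icc 0 T))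
    (hb0 : ∀ t ∈ Icc (0:ℝ) T, 0 ≤ b t) (hc0 : ∀ t ∈ Icc (0:ℝ) T, 0 ≤ c t) :
    ∃ f : ℝ → ℝ, f T = 0 ∧
      (∀ t ∈ Icc (0:ℝ) T,
        HasDerivWithinAt f (-(f t * a t - b t * (f t)^2 + c t)) (Icc 0 T) t) ∧
      (∀ t ∈ Icc (0:ℝ) T, 0 ≤ f t) := by
  -- bounds on coefficients
  obtain ⟨Ka₀, hKa₀⟩ := isCompact_Icc.exists_bound_of_continuousOn ha
  obtain ⟨Kb₀, hKb₀⟩ := isCompact_Icc.exists_bound_of_continuousOn hb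
  obtain ⟨Kc₀, hKc₀⟩ := isCompact_Icc.exists_bound_of_continuousOn hc
  set Ka : ℝ := max Ka₀ 1 with hKadef
  set Kb : ℝ := max Kb₀ 0 with hKbdef
  set Kc : ℝ := max Kc₀ 0 with hKcdef
  have hKa1 : (1:ℝ) ≤ Ka := le_max_right _ _
  have hKa0 : 0 < Ka := lt_of_lt_of_le one_pos hKa1
  have hKb0 : 0 ≤ Kb := le_max_right _ _
  have hKc0 : 0 ≤ Kc := le_max_right _ _
  have hKa : ∀ t ∈ Icc (0:ℝ) T, |a t| ≤ Ka := fun t ht => (hKa₀ t ht).trans (le_max_left _ _)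
  have hKb : ∀ t ∈ Icc (0:ℝ) T, |b t| ≤ Kb := fun t ht => (hKb₀ t ht).trans (le_max_left _ _)
  have hKc : ∀ t ∈ Icc (0:ℝ) T, |c t| ≤ Kc := fun t ht => (hKc₀ t ht).trans (le_max_left _ _)
  -- the a priori bound
  set M : ℝ := Kc / Ka * (Real.exp (Ka * T) - 1) with hMdef
  have hM0 : 0 ≤ M := by
    apply mul_nonneg (div_nonneg hKc0 hKa0.le)
    have : (1:ℝ) ≤ Real.exp (Ka * T) := Real.one_le_exp (by positivity)
    linarith
  have hgb : ∀ s ∈ Icc (0:ℝ) T, gronwallBound 0 Ka Kc s ≤ M := by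
    intro s hs
    rw [gronwallBound_of_K_ne_0 hKa0.ne']
    rw [hMdef]
    have h1 : Real.exp (Ka * s) ≤ Real.exp (Ka * T) :=
      Real.exp_le_exp.2 (mul_le_mul_of_nonneg_left hs.2 hKa0.le)
    have h2 : (0:ℝ) ≤ Kc / Ka := div_nonneg hKc0 hKa0.le
    nlinarith
  -- truncation
  set pr : ℝ → ℝ := fun x => min (max x 0) M with hprdef
  have hpr0 : ∀ x, 0 ≤ pr x := fun x => le_min (le_max_right _ _) hM0
  have hprM : ∀ x, pr x ≤ M := fun x => min_le_right _ _
  have hpr_le : ∀ x, 0 ≤ x → pr x ≤ x := by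
    intro x hx
    rw [hprdef]; simp only
    rw [max_eq_left hx]
    exact min_le_left _ _
  have hpr_eq : ∀ x, 0 ≤ x → x ≤ M → pr x = x := by
    intro x h1 h2
    rw [hprdef]; simp only
    rw [max_eq_left h1, min_eq_left h2]
  have hpr_neg : ∀ x, x ≤ 0 → pr x = 0 := by
    intro x hx
    rw [hprdef]; simp only
    rw [max_eq_right hx, min_eq_left hM0]
  have hpr_lip : ∀ x y, |pr x - pr y| ≤ |x - y| := by
    intro x y
    have h1 := abs_min_sub_min_le_max (max x 0) M (max y 0) M
    refine h1.trans (max_le (abs_max_sub_max_le_abs x y 0) ?_)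
    simp [abs_nonneg]
  -- reversed-time truncated vector field
  set u : ℝ → ℝ → ℝ :=
    fun s x => a (T - s) * pr x - b (T - s) * (pr x)^2 + c (T - s) with hudef
  have hmapsTo : MapsTo (fun s : ℝ => T - s) (Icc 0 T) (Icc 0 T) := by
    intro s hs
    simp only [mem_Icc] at hs ⊢
    constructor <;> linarith [hs.1, hs.2]
  have hφc : ContinuousOn (fun s : ℝ => T - s) (Icc 0 T) :=
    (continuous_const.sub continuous_id).continuousOn
  set C : ℝ := Ka * M + Kb * M^2 + Kc with hCdef
  have hC0 : 0 ≤ C := by positivity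
  set L : NNReal := Real.toNNReal (Ka + 2 * Kb * M) with hLdef
  have hLcoe : (L : ℝ) = Ka + 2 * Kb * M := Real.coe_toNNReal _ (by positivity)
  have hulip : ∀ s ∈ Icc (0:ℝ) T, LipschitzWith L (u s) := by
    intro s hs
    apply LipschitzWith.of_dist_le_mul
    intro x y
    rw [Real.dist_eq, Real.dist_eq, hLcoe]
    have hsT : T - s ∈ Icc (0:ℝ) T := hmapsTo hs
    have key : u s x - u s y
        = (a (T - s) - b (T - s) * (pr x + pr y)) * (pr x - pr y) := by
      rw [hudef]; ring
    rw [key, abs_mul]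
    have hsum : |pr x + pr y| ≤ 2 * M := by
      rw [abs_of_nonneg (add_nonneg (hpr0 x) (hpr0 y))]
      linarith [hprM x, hprM y]
    have h2 : |b (T - s) * (pr x + pr y)| ≤ Kb * (2 * M) := by
      rw [abs_mul]
      exact mul_le_mul (hKb _ hsT) hsum (abs_nonneg _) hKb0
    have h1 : |a (T - s) - b (T - s) * (pr x + pr y)| ≤ Ka + 2 * Kb * M := by
      calc |a (T - s) - b (T - s) * (pr x + pr y)|
          ≤ |a (T - s)| + |b (T - s) * (pr x + pr y)| := abs_sub _ _
        _ ≤ Ka + Kb * (2 * M) := add_le_add (hKa _ hsT) h2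
        _ = Ka + 2 * Kb * M := by ring
    exact mul_le_mul h1 (hpr_lip x y) (abs_nonneg _) (by positivity)
  have hpl : IsPicardLindelof u (tmin := 0) (tmax := T) ⟨0, left_mem_Icc.2 hT.le⟩ (0:ℝ)
      (Real.toNNReal (C * T)) 0 (Real.toNNReal C) L :=
    { lipschitzOnWith := fun s hs => (hulip s hs).lipschitzOnWith
      continuousOn := fun x _ => by
        exact (((ha.comp hφc hmapsTo).mul continuousOn_const).sub
          ((hb.comp hφc hmapsTo).mul continuousOn_const)).add (hc.comp hφc hmapsTo)
      norm_le := by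
        intro s hs x _
        rw [Real.norm_eq_abs, Real.coe_toNNReal _ hC0]
        have hsT : T - s ∈ Icc (0:ℝ) T := hmapsTo hs
        have e1 : |a (T - s) * pr x| ≤ Ka * M := by
          rw [abs_mul, abs_of_nonneg (hpr0 x)]
          exact mul_le_mul (hKa _ hsT) (hprM x) (hpr0 x) hKa0.le
        have e2 : |b (T - s) * (pr x)^2| ≤ Kb * M^2 := by
          rw [abs_mul, abs_of_nonneg (sq_nonneg (pr x))]
          exact mul_le_mul (hKb _ hsT) (by nlinarith [hpr0 x, hprM x]) (sq_nonneg _) hKb0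
        calc |u s x| ≤ |a (T - s) * pr x - b (T - s) * (pr x)^2| + |c (T - s)| := by
              rw [hudef]; exact abs_add_le _ _
          _ ≤ |a (T - s) * pr x| + |b (T - s) * (pr x)^2| + |c (T - s)| := by
              linarith [abs_sub (a (T - s) * pr x) (b (T - s) * (pr x)^2)]
          _ ≤ Ka * M + Kb * M^2 + Kc := by linarith [hKc _ hsT]
      mul_max_le := by
        show (Real.toNNReal C : ℝ) * max (T - 0) (0 - 0) ≤ (Real.toNNReal (C * T) : ℝ) - ((0:NNReal):ℝ)
        rw [Real.coe_toNNReal _ hC0, Real.coe_toNNReal _ (by positivity), NNReal.coe_zero]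
        simp only [sub_zero, sub_self]
        rw [max_eq_left hT.le] }
  obtain ⟨Q, hQ0', hQd⟩ := hpl.exists_eq_forall_mem_Icc_hasDerivWithinAt₀
  have hQ0 : Q 0 = 0 := hQ0'
  have hQc : ContinuousOn Q (Icc 0 T) := fun s hs => (hQd s hs).continuousWithinAt
  -- nonnegativity of Q
  have hQnn : ∀ s ∈ Icc (0:ℝ) T, 0 ≤ Q s := by
    by_contra hcon
    push_neg at hcon
    obtain ⟨s₁, hs₁, hneg⟩ := hcon
    set S : Set ℝ := Icc 0 s₁ ∩ Q ⁻¹' (Ici 0) with hSdef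
    have hSclosed : IsClosed S :=
      (hQc.mono (Icc_subset_Icc_right hs₁.2)).preimage_isClosed_of_isClosed
        isClosed_Icc isClosed_Ici
    have hS0 : (0:ℝ) ∈ S := ⟨⟨le_refl 0, hs₁.1⟩, by rw [mem_preimage, hQ0]; exact mem_Ici.2 le_rfl⟩
    have hSbdd : BddAbove S := ⟨s₁, fun s hs => hs.1.2⟩
    set s₂ : ℝ := sSup S with hs₂def
    have hs₂S : s₂ ∈ S := hSclosed.csSup_mem ⟨0, hS0⟩ hSbdd
    have hs₂ : s₂ ∈ Icc (0:ℝ) s₁ := hs₂S.1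
    have hQs₂ : 0 ≤ Q s₂ := hs₂S.2
    have hlt : ∀ x ∈ Ioc s₂ s₁, Q x < 0 := by
      intro x hx
      by_contra h
      push_neg at h
      have hxS : x ∈ S := ⟨⟨hs₂.1.trans hx.1.le, hx.2⟩, h⟩
      exact absurd (le_csSup hSbdd hxS) (not_le.2 hx.1)
    have hmono : MonotoneOn Q (Icc s₂ s₁) := by
      have hint : ∀ x ∈ Ioo s₂ s₁, HasDerivAt Q (u x (Q x)) x := by
        intro x hx
        have hxI : x ∈ Icc (0:ℝ) T := ⟨hs₂.1.trans hx.1.le, hx.2.le.trans hs₁.2⟩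
        exact (hQd x hxI).hasDerivAt
          (Icc_mem_nhds (lt_of_le_of_lt hs₂.1 hx.1) (lt_of_lt_of_le hx.2 hs₁.2))
      apply monotoneOn_of_deriv_nonneg (convex_Icc _ _)
        (hQc.mono (Icc_subset_Icc hs₂.1 hs₁.2))
      · rw [interior_Icc]
        exact fun x hx => (hint x hx).differentiableAt.differentiableWithinAt
      · rw [interior_Icc]
        intro x hx
        have hxI : x ∈ Icc (0:ℝ) T := ⟨hs₂.1.trans hx.1.le, hx.2.le.trans hs₁.2⟩
        rw [(hint x hx).deriv]
        have hQx : Q x < 0 := hlt x ⟨hx.1, hx.2.le⟩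
        show 0 ≤ a (T - x) * pr (Q x) - b (T - x) * (pr (Q x))^2 + c (T - x)
        rw [hpr_neg _ hQx.le]
        simpa using hc0 _ (hmapsTo hxI)
    have hfin := hmono (left_mem_Icc.2 hs₂.2) (right_mem_Icc.2 hs₂.2) hs₂.2
    linarith
  -- Gronwall bound
  have hIci : ∀ x ∈ Ico (0:ℝ) T, Icc (0:ℝ) T ∈ nhdsWithin x (Ici x) := by
    intro x hx
    rw [mem_nhdsWithin]
    exact ⟨Iio T, isOpen_Iio, hx.2, fun s hs => ⟨hx.1.trans hs.2, hs.1.le⟩⟩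
  have hslope : ∀ x ∈ Ico (0:ℝ) T, ∀ r, u x (Q x) < r →
      ∃ᶠ z in nhdsWithin x (Ioi x), (z - x)⁻¹ * (Q z - Q x) < r := by
    intro x hx r hr
    have hd := (hQd x (Ico_subset_Icc_self hx)).mono_of_mem_nhdsWithin (hIci x hx)
    exact (hd.liminf_right_slope_le hr).mono fun z hz => by
      rwa [slope_def_field, div_eq_inv_mul] at hz
  have hbound : ∀ x ∈ Ico (0:ℝ) T, u x (Q x) ≤ Ka * Q x + Kc := by
    intro x hx
    have hxI := Ico_subset_Icc_self hx
    have hsT : T - x ∈ Icc (0:ℝ) T := hmapsTo hxI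
    have h0 : 0 ≤ Q x := hQnn x hxI
    have h1 : pr (Q x) ≤ Q x := hpr_le _ h0
    have h2 : 0 ≤ pr (Q x) := hpr0 _
    have h3 : a (T - x) * pr (Q x) ≤ Ka * Q x := by
      calc a (T - x) * pr (Q x) ≤ |a (T - x)| * pr (Q x) :=
            mul_le_mul_of_nonneg_right (le_abs_self _) h2
        _ ≤ Ka * pr (Q x) := mul_le_mul_of_nonneg_right (hKa _ hsT) h2
        _ ≤ Ka * Q x := mul_le_mul_of_nonneg_left h1 hKa0.le
    have h4 : 0 ≤ b (T - x) * (pr (Q x))^2 := mul_nonneg (hb0 _ hsT) (sq_nonneg _)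
    have h5 : c (T - x) ≤ Kc := (le_abs_self _).trans (hKc _ hsT)
    show a (T - x) * pr (Q x) - b (T - x) * (pr (Q x))^2 + c (T - x) ≤ Ka * Q x + Kc
    linarith
  have hQle : ∀ s ∈ Icc (0:ℝ) T, Q s ≤ M := by
    intro s hs
    have hmain := le_gronwallBound_of_liminf_deriv_right_le (f := Q)
      (f' := fun s => u s (Q s)) (δ := 0) (K := Ka) (ε := Kc) (a := 0) (b := T)
      hQc hslope (le_of_eq hQ0) hbound s hs
    rw [sub_zero] at hmain
    exact hmain.trans (hgb s hs)
  -- the true (untruncated) equation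
  have hQd' : ∀ s ∈ Icc (0:ℝ) T,
      HasDerivWithinAt Q (a (T - s) * Q s - b (T - s) * (Q s)^2 + c (T - s)) (Icc 0 T) s := by
    intro s hs
    have hds := hQd s hs
    have : u s (Q s) = a (T - s) * Q s - b (T - s) * (Q s)^2 + c (T - s) := by
      show a (T - s) * pr (Q s) - b (T - s) * (pr (Q s))^2 + c (T - s) = _
      rw [hpr_eq _ (hQnn s hs) (hQle s hs)]
    rwa [this] at hds
  -- conclude
  refine ⟨fun t => Q (T - t), by show Q (T - T) = 0; rw [sub_self]; exact hQ0, ?_, ?_⟩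
  · intro t ht
    have hmem : T - t ∈ Icc (0:ℝ) T := hmapsTo ht
    have hφ : HasDerivWithinAt (fun t : ℝ => T - t) (-1) (Icc 0 T) t :=
      ((hasDerivAt_id t).const_sub T).hasDerivWithinAt
    have hcomp := HasDerivWithinAt.comp t (hQd' (T - t) hmem) hφ hmapsTo
    have heq : (a (T - (T - t)) * Q (T - t) - b (T - (T - t)) * (Q (T - t))^2
        + c (T - (T - t))) * (-1)
        = -(Q (T - t) * a t - b t * (Q (T - t))^2 + c t) := by
      rw [sub_sub_cancel]; ring
    rw [heq] at hcomp
    exact hcomp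
  · intro t ht
    exact hQnn _ (hmapsTo ht)


/-- Well-posedness of the Riccati equation (3.11) under Assumption 3.3:
given the nonnegative solution `P₁` of the Riccati equation (3.10), with
`ℛ₁ = R₁ + (D₁² + D̃₁²) P₁ ≥ δ`, and assuming the zeroth-order coefficient
`P₁(E₁ + C₁F₁ + C̃₁F̃₁) − (B₁ + C₁D₁ + C̃₁D̃₁) P₁² ℛ₁⁻¹ (D₁F₁ + D̃₁F̃₁) − Q₁(1−λ)`
is nonnegative, the terminal value problem (3.11) has a unique solution `P₂`,
which is moreover nonnegative on `[0,T]`. -/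
theorem riccati_P2_exists_unique
    (T : ℝ) (hT : 0 < T)
    (A₁ B₁ C₁ Ct₁ D₁ Dt₁ E₁ F₁ Ft₁ Q₁ R₁ : ℝ → ℝ)
    (hA₁ : ContinuousOn A₁ (Icc 0 T)) (hB₁ : ContinuousOn B₁ (Icc 0 T))
    (hC₁ : ContinuousOn C₁ (Icc 0 T)) (hCt₁ : ContinuousOn Ct₁ (Icc 0 T))
    (hD₁ : ContinuousOn D₁ (Icc 0 T)) (hDt₁ : ContinuousOn Dt₁ (Icc 0 T))
    (hE₁ : ContinuousOn E₁ (Icc 0 T)) (hF₁ : ContinuousOn F₁ (Icc 0 T))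
    (hFt₁ : ContinuousOn Ft₁ (Icc 0 T))
    (hQ₁ : ContinuousOn Q₁ (Icc 0 T)) (hR₁ : ContinuousOn R₁ (Icc 0 T))
    (hQ₁pos : ∀ t ∈ Icc (0 : ℝ) T, 0 ≤ Q₁ t)
    (δ : ℝ) (hδ : 0 < δ)
    (hR₁pos : ∀ t ∈ Icc (0 : ℝ) T, δ ≤ R₁ t)
    (lam : ℝ) (hlam : lam ∈ Icc (0 : ℝ) 1)
    (G₁ : ℝ) (hG₁ : 0 ≤ G₁)
    (P₁ : ℝ → ℝ)
    (hP₁nonneg : ∀ t ∈ Icc (0 : ℝ) T, 0 ≤ P₁ t)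
    (hP₁T : P₁ T = G₁)
    (hP₁ : ∀ t ∈ Icc (0 : ℝ) T,
      HasDerivWithinAt P₁
        (-((2 * A₁ t + (C₁ t) ^ 2 + (Ct₁ t) ^ 2) * P₁ t
          - (B₁ t + C₁ t * D₁ t + Ct₁ t * Dt₁ t) ^ 2 * (P₁ t) ^ 2
            / (R₁ t + ((D₁ t) ^ 2 + (Dt₁ t) ^ 2) * P₁ t)
          + Q₁ t)) (Icc 0 T) t)
    (hR₁cal : ∀ t ∈ Icc (0 : ℝ) T, δ ≤ R₁ t + ((D₁ t) ^ 2 + (Dt₁ t) ^ 2) * P₁ t)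
    (hA33 : ∀ t ∈ Icc (0 : ℝ) T,
      0 ≤ P₁ t * (E₁ t + C₁ t * F₁ t + Ct₁ t * Ft₁ t)
        - (B₁ t + C₁ t * D₁ t + Ct₁ t * Dt₁ t) * (P₁ t) ^ 2
          * (R₁ t + ((D₁ t) ^ 2 + (Dt₁ t) ^ 2) * P₁ t)⁻¹
          * (D₁ t * F₁ t + Dt₁ t * Ft₁ t)
        - Q₁ t * (1 - lam)) :
    ∃ P₂ : ℝ → ℝ,
      (P₂ T = 0 ∧
        ∀ t ∈ Icc (0 : ℝ) T,
          HasDerivWithinAt P₂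
            (-(P₂ t * (2 * A₁ t + E₁ t
                - 2 * (B₁ t + C₁ t * D₁ t + Ct₁ t * Dt₁ t) * P₁ t
                  * (R₁ t + ((D₁ t) ^ 2 + (Dt₁ t) ^ 2) * P₁ t)⁻¹ * B₁ t
                - (D₁ t * F₁ t + Dt₁ t * Ft₁ t) * B₁ t * P₁ t)
              - (B₁ t) ^ 2 * (R₁ t + ((D₁ t) ^ 2 + (Dt₁ t) ^ 2) * P₁ t)⁻¹ * (P₂ t) ^ 2
              + P₁ t * (E₁ t + C₁ t * F₁ t + Ct₁ t * Ft₁ t)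
              - (B₁ t + C₁ t * D₁ t + Ct₁ t * Dt₁ t) * (P₁ t) ^ 2
                * (R₁ t + ((D₁ t) ^ 2 + (Dt₁ t) ^ 2) * P₁ t)⁻¹
                * (D₁ t * F₁ t + Dt₁ t * Ft₁ t)
              - Q₁ t * (1 - lam))) (Icc 0 T) t) ∧
      (∀ P₂' : ℝ → ℝ,
        (P₂' T = 0 ∧
          ∀ t ∈ Icc (0 : ℝ) T,
            HasDerivWithinAt P₂'
              (-(P₂' t * (2 * A₁ t + E₁ t
                  - 2 * (B₁ t + C₁ t * D₁ t + Ct₁ t * Dt₁ t) * P₁ t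
                    * (R₁ t + ((D₁ t) ^ 2 + (Dt₁ t) ^ 2) * P₁ t)⁻¹ * B₁ t
                  - (D₁ t * F₁ t + Dt₁ t * Ft₁ t) * B₁ t * P₁ t)
                - (B₁ t) ^ 2 * (R₁ t + ((D₁ t) ^ 2 + (Dt₁ t) ^ 2) * P₁ t)⁻¹ * (P₂' t) ^ 2
                + P₁ t * (E₁ t + C₁ t * F₁ t + Ct₁ t * Ft₁ t)
                - (B₁ t + C₁ t * D₁ t + Ct₁ t * Dt₁ t) * (P₁ t) ^ 2
                  * (R₁ t + ((D₁ t) ^ 2 + (Dt₁ t) ^ 2) * P₁ t)⁻¹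
                  * (D₁ t * F₁ t + Dt₁ t * Ft₁ t)
                - Q₁ t * (1 - lam))) (Icc 0 T) t) →
        EqOn P₂' P₂ (Icc 0 T)) ∧
      (∀ t ∈ Icc (0 : ℝ) T, 0 ≤ P₂ t) := by
  classical
  set Rc : ℝ → ℝ := fun t => R₁ t + ((D₁ t)^2 + (Dt₁ t)^2) * P₁ t with hRcdef
  have hP₁c : ContinuousOn P₁ (Icc 0 T) := fun t ht => (hP₁ t ht).continuousWithinAt
  have hRcC : ContinuousOn Rc (Icc 0 T) :=
    hR₁.add (((hD₁.pow 2).add (hDt₁.pow 2)).mul hP₁c)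
  have hRcpos : ∀ t ∈ Icc (0:ℝ) T, 0 < Rc t := fun t ht => lt_of_lt_of_le hδ (hR₁cal t ht)
  have hRcinv : ContinuousOn (fun t => (Rc t)⁻¹) (Icc 0 T) :=
    hRcC.inv₀ fun t ht => (hRcpos t ht).ne'
  have h1 : ContinuousOn (fun t => B₁ t + C₁ t * D₁ t + Ct₁ t * Dt₁ t) (Icc 0 T) :=
    (hB₁.add (hC₁.mul hD₁)).add (hCt₁.mul hDt₁)
  have h2 : ContinuousOn (fun t => D₁ t * F₁ t + Dt₁ t * Ft₁ t) (Icc 0 T) :=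
    (hD₁.mul hF₁).add (hDt₁.mul hFt₁)
  set aa : ℝ → ℝ := fun t => 2 * A₁ t + E₁ t
      - 2 * (B₁ t + C₁ t * D₁ t + Ct₁ t * Dt₁ t) * P₁ t * (Rc t)⁻¹ * B₁ t
      - (D₁ t * F₁ t + Dt₁ t * Ft₁ t) * B₁ t * P₁ t with haadef
  set bb : ℝ → ℝ := fun t => (B₁ t)^2 * (Rc t)⁻¹ with hbbdef
  set cc : ℝ → ℝ := fun t => P₁ t * (E₁ t + C₁ t * F₁ t + Ct₁ t * Ft₁ t)
      - (B₁ t + C₁ t * D₁ t + Ct₁ t * Dt₁ t) * (P₁ t)^2 * (Rc t)⁻¹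
        * (D₁ t * F₁ t + Dt₁ t * Ft₁ t)
      - Q₁ t * (1 - lam) with hccdef
  have haaC : ContinuousOn aa (Icc 0 T) :=
    (((continuousOn_const.mul hA₁).add hE₁).sub
      ((((continuousOn_const.mul h1).mul hP₁c).mul hRcinv).mul hB₁)).sub
      ((h2.mul hB₁).mul hP₁c)
  have hbbC : ContinuousOn bb (Icc 0 T) := (hB₁.pow 2).mul hRcinv
  have hccC : ContinuousOn cc (Icc 0 T) :=
    ((hP₁c.mul ((hE₁.add (hC₁.mul hF₁)).add (hCt₁.mul hFt₁))).sub
      (((h1.mul (hP₁c.pow 2)).mul hRcinv).mul h2)).sub (hQ₁.mul continuousOn_const)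
  have hbb0 : ∀ t ∈ Icc (0:ℝ) T, 0 ≤ bb t := fun t ht =>
    mul_nonneg (sq_nonneg _) (inv_nonneg.2 (hRcpos t ht).le)
  have hcc0 : ∀ t ∈ Icc (0:ℝ) T, 0 ≤ cc t := fun t ht => hA33 t ht
  obtain ⟨f, hfT, hfd, hfnn⟩ := riccati_exists_aux T hT aa bb cc haaC hbbC hccC hbb0 hcc0
  refine ⟨f, ⟨hfT, fun t ht => ?_⟩, fun g hg => ?_, hfnn⟩
  · have hder := hfd t ht
    have heq : -(f t * aa t - bb t * (f t)^2 + cc t)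
        = -(f t * (2 * A₁ t + E₁ t
            - 2 * (B₁ t + C₁ t * D₁ t + Ct₁ t * Dt₁ t) * P₁ t
              * (R₁ t + ((D₁ t) ^ 2 + (Dt₁ t) ^ 2) * P₁ t)⁻¹ * B₁ t
            - (D₁ t * F₁ t + Dt₁ t * Ft₁ t) * B₁ t * P₁ t)
          - (B₁ t) ^ 2 * (R₁ t + ((D₁ t) ^ 2 + (Dt₁ t) ^ 2) * P₁ t)⁻¹ * (f t) ^ 2
          + P₁ t * (E₁ t + C₁ t * F₁ t + Ct₁ t * Ft₁ t)
          - (B₁ t + C₁ t * D₁ t + Ct₁ t * Dt₁ t) * (P₁ t) ^ 2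
            * (R₁ t + ((D₁ t) ^ 2 + (Dt₁ t) ^ 2) * P₁ t)⁻¹
            * (D₁ t * F₁ t + Dt₁ t * Ft₁ t)
          - Q₁ t * (1 - lam)) := by
      simp only [haadef, hbbdef, hccdef, hRcdef]
      ring
    rw [← heq]
    exact hder
  · obtain ⟨hgT, hgd⟩ := hg
    apply riccati_unique_aux T aa bb cc haaC hbbC g f hgT hfT ?_ hfd
    intro t ht
    have hder := hgd t ht
    have heq : -(g t * aa t - bb t * (g t)^2 + cc t)
        = -(g t * (2 * A₁ t + E₁ t
            - 2 * (B₁ t + C₁ t * D₁ t + Ct₁ t * Dt₁ t) * P₁ t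
              * (R₁ t + ((D₁ t) ^ 2 + (Dt₁ t) ^ 2) * P₁ t)⁻¹ * B₁ t
            - (D₁ t * F₁ t + Dt₁ t * Ft₁ t) * B₁ t * P₁ t)
          - (B₁ t) ^ 2 * (R₁ t + ((D₁ t) ^ 2 + (Dt₁ t) ^ 2) * P₁ t)⁻¹ * (g t) ^ 2
          + P₁ t * (E₁ t + C₁ t * F₁ t + Ct₁ t * Ft₁ t)
          - (B₁ t + C₁ t * D₁ t + Ct₁ t * Dt₁ t) * (P₁ t) ^ 2
            * (R₁ t + ((D₁ t) ^ 2 + (Dt₁ t) ^ 2) * P₁ t)⁻¹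
            * (D₁ t * F₁ t + Dt₁ t * Ft₁ t)
          - Q₁ t * (1 - lam)) := by
      simp only [haadef, hbbdef, hccdef, hRcdef]
      ring
    rw [heq]
    exact hder
end
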